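/- Suppose each Pᵢ contains a vector with all entries strictly positive, each Cᵢᵢ is symmetric positive semidefinite, and λ > 0. Then x = (x₁,…,x_p) satisfies xᵢ ∈ argmin_{y ∈ Pᵢ} (bᵢ + ½Cᵢᵢy + Σ_{j≠i} Cᵢⱼxⱼ)ᵀy + λ·yᵀln(y) for all i ∈ [p] if and only if there exists v ∈ ℝ^{p(n−1)} such that s = E_{[1,p]}x and x = exp((1/λ)(E_{[1,p]}ᵀv − b − Cx) − 1_{pm}), where exp and ln act componentwise and yᵀln(y) = Σₖ yₖ ln(yₖ) with the convention 0·ln(0) = 0. -/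

import Mathlib

open Matrix RealInnerProductSpace

lemma exists_mulVec_of_orth {n m : ℕ} (A : Matrix (Fin n) (Fin m) ℝ) (w : Fin m → ℝ)
    (h : ∀ z, A *ᵥ z = 0 → w ⬝ᵥ z = 0) : ∃ v, Aᵀ *ᵥ v = w := by
  classical
  set T : EuclideanSpace ℝ (Fin m) →ₗ[ℝ] EuclideanSpace ℝ (Fin n) := Matrix.toEuclideanLin A
  have hadj : Matrix.toEuclideanLin Aᵀ = LinearMap.adjoint T := by
    have := Matrix.toEuclideanLin_conjTranspose_eq_adjoint (𝕜 := ℝ) A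
    rw [Matrix.conjTranspose_eq_transpose_of_trivial] at this
    exact this
  have hker : (LinearMap.range (LinearMap.adjoint T))ᗮ = LinearMap.ker T := by
    ext x
    simp only [Submodule.mem_orthogonal, LinearMap.mem_range, LinearMap.mem_ker]
    constructor
    · intro hx
      have h1 : (inner ℝ (T x) (T x) : ℝ) = 0 := by
        have := hx (LinearMap.adjoint T (T x)) ⟨T x, rfl⟩
        rwa [LinearMap.adjoint_inner_left] at this
      exact inner_self_eq_zero.mp h1
    · rintro hx u ⟨y, rfl⟩
      rw [LinearMap.adjoint_inner_left, hx, inner_zero_right]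
  have hrange : LinearMap.range (LinearMap.adjoint T) = (LinearMap.ker T)ᗮ := by
    rw [← hker, Submodule.orthogonal_orthogonal]
  have hw : (WithLp.equiv 2 (Fin m → ℝ)).symm w ∈ (LinearMap.ker T)ᗮ := by
    intro z hz
    have hz' : A *ᵥ (WithLp.equiv 2 (Fin m → ℝ)) z = 0 := by
      have : T z = 0 := hz
      have := congrArg (WithLp.equiv 2 (Fin n → ℝ)) this
      simpa [T, Matrix.toEuclideanLin_apply] using this
    have := h _ hz'
    simpa [real_inner_comm, PiLp.inner_apply, dotProduct, mul_comm] using this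
  rw [← hrange] at hw
  obtain ⟨v, hv⟩ := hw
  refine ⟨(WithLp.equiv 2 (Fin n → ℝ)) v, ?_⟩
  have := congrArg (WithLp.equiv 2 (Fin m → ℝ)) hv
  rw [← hadj] at hv
  have := congrArg (WithLp.equiv 2 (Fin m → ℝ)) hv
  simpa [Matrix.toEuclideanLin_apply] using this

-- entropy convexity
lemma ent_ineq {x y : ℝ} (hx : 0 < x) (hy : 0 ≤ y) :
    (Real.log x + 1) * (y - x) ≤ y * Real.log y - x * Real.log x := by
  rcases eq_or_lt_of_le hy with h | hy
  · rw [← h]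
    simp only [Real.log_zero, zero_mul, zero_sub, mul_neg]
    nlinarith [hx]
  · have h1 := Real.log_le_sub_one_of_pos (x := x / y) (by positivity)
    have h2 : Real.log (x / y) = Real.log x - Real.log y := Real.log_div hx.ne' hy.ne'
    have h3 : y * (Real.log x - Real.log y) ≤ y * (x / y - 1) := by
      rw [← h2]; exact mul_le_mul_of_nonneg_left h1 hy.le
    have h4 : y * (x / y - 1) = x - y := by field_simp
    nlinarith [h3]

-- symmetric dot product swap
lemma dot_swap {m : ℕ} {Q : Matrix (Fin m) (Fin m) ℝ} (hQsym : Qᵀ = Q)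
    (u w : Fin m → ℝ) : (Q *ᵥ u) ⬝ᵥ w = (Q *ᵥ w) ⬝ᵥ u := by
  rw [dotProduct_comm, Matrix.dotProduct_mulVec, ← Matrix.mulVec_transpose, hQsym]

-- quadratic convexity
lemma quad_ineq {m : ℕ} {Q : Matrix (Fin m) (Fin m) ℝ} (hQ : Q.PosSemidef)
    (x y : Fin m → ℝ) :
    (Q *ᵥ x) ⬝ᵥ y - (Q *ᵥ x) ⬝ᵥ x ≤ (1/2) * ((Q *ᵥ y) ⬝ᵥ y) - (1/2) * ((Q *ᵥ x) ⬝ᵥ x) := by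
  have hQsym : Qᵀ = Q := by
    have h := hQ.1
    rw [Matrix.IsHermitian] at h
    simpa using h
  have h0 := hQ.dotProduct_mulVec_nonneg (y - x)
  rw [star_trivial] at h0
  have hexp : (y - x) ⬝ᵥ (Q *ᵥ (y - x)) =
      (Q *ᵥ y) ⬝ᵥ y - 2 * ((Q *ᵥ x) ⬝ᵥ y) + (Q *ᵥ x) ⬝ᵥ x := by
    have e1 : Q *ᵥ (y - x) = Q *ᵥ y - Q *ᵥ x := by rw [Matrix.mulVec_sub]
    rw [e1, dotProduct_comm, sub_dotProduct, dotProduct_sub,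
      dotProduct_sub]
    have := dot_swap hQsym y x
    linarith [this]
  linarith

-- derivative of the cost along a line, entropy restricted to K
lemma deriv_helper {m : ℕ} (a : Fin m → ℝ) (Q : Matrix (Fin m) (Fin m) ℝ)
    (hQsym : Qᵀ = Q) (lam : ℝ) (x z : Fin m → ℝ) (K : Finset (Fin m))
    (hK : ∀ k ∈ K, x k ≠ 0) :
    HasDerivAt (fun t : ℝ => a ⬝ᵥ (x + t • z)
        + (1/2) * ((Q *ᵥ (x + t • z)) ⬝ᵥ (x + t • z))
        + lam * ∑ k ∈ K, (x k + t * z k) * Real.log (x k + t * z k))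
      (a ⬝ᵥ z + (Q *ᵥ x) ⬝ᵥ z + lam * ∑ k ∈ K, (Real.log (x k) + 1) * z k) 0 := by
  have h1 : ∀ t : ℝ, a ⬝ᵥ (x + t • z) = a ⬝ᵥ x + t * (a ⬝ᵥ z) := by
    intro t
    simp [dotProduct_add, dotProduct_smul, smul_eq_mul]
  have h2 : ∀ t : ℝ, (Q *ᵥ (x + t • z)) ⬝ᵥ (x + t • z) =
      (Q *ᵥ x) ⬝ᵥ x + t * ((Q *ᵥ x) ⬝ᵥ z + (Q *ᵥ z) ⬝ᵥ x) + t^2 * ((Q *ᵥ z) ⬝ᵥ z) := by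
    intro t
    rw [Matrix.mulVec_add, Matrix.mulVec_smul]
    simp only [add_dotProduct, dotProduct_add, smul_dotProduct,
      dotProduct_smul, smul_eq_mul]
    ring
  have heq : (fun t : ℝ => a ⬝ᵥ (x + t • z)
        + (1/2) * ((Q *ᵥ (x + t • z)) ⬝ᵥ (x + t • z))
        + lam * ∑ k ∈ K, (x k + t * z k) * Real.log (x k + t * z k)) =
      (fun t : ℝ => (a ⬝ᵥ x + t * (a ⬝ᵥ z))
        + (1/2) * ((Q *ᵥ x) ⬝ᵥ x + t * ((Q *ᵥ x) ⬝ᵥ z + (Q *ᵥ z) ⬝ᵥ x) + t^2 * ((Q *ᵥ z) ⬝ᵥ z))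
        + lam * ∑ k ∈ K, (x k + t * z k) * Real.log (x k + t * z k)) := by
    funext t; rw [h1, h2]
  rw [heq]
  have hA : HasDerivAt (fun t : ℝ => a ⬝ᵥ x + t * (a ⬝ᵥ z)) (a ⬝ᵥ z) 0 := by
    simpa using ((hasDerivAt_id (0:ℝ)).mul_const (a ⬝ᵥ z)).const_add (a ⬝ᵥ x)
  have hq1 : HasDerivAt (fun t : ℝ => t * ((Q *ᵥ x) ⬝ᵥ z + (Q *ᵥ z) ⬝ᵥ x))
      ((Q *ᵥ x) ⬝ᵥ z + (Q *ᵥ z) ⬝ᵥ x) 0 := by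
    simpa using (hasDerivAt_id (0:ℝ)).mul_const _
  have hq2 : HasDerivAt (fun t : ℝ => t^2 * ((Q *ᵥ z) ⬝ᵥ z)) 0 0 := by
    simpa using (hasDerivAt_pow 2 (0:ℝ)).mul_const ((Q *ᵥ z) ⬝ᵥ z)
  have hq : HasDerivAt (fun t : ℝ => (1/2) * ((Q *ᵥ x) ⬝ᵥ x
      + t * ((Q *ᵥ x) ⬝ᵥ z + (Q *ᵥ z) ⬝ᵥ x) + t^2 * ((Q *ᵥ z) ⬝ᵥ z)))
      ((1/2) * ((Q *ᵥ x) ⬝ᵥ z + (Q *ᵥ z) ⬝ᵥ x)) 0 := by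
    have := ((hq1.const_add ((Q *ᵥ x) ⬝ᵥ x)).add hq2).const_mul (1/2 : ℝ)
    simpa using this
  have hent : HasDerivAt (fun t : ℝ => lam * ∑ k ∈ K, (x k + t * z k) * Real.log (x k + t * z k))
      (lam * ∑ k ∈ K, (Real.log (x k) + 1) * z k) 0 := by
    refine HasDerivAt.const_mul _ ?_
    refine HasDerivAt.fun_sum fun k hk => ?_
    have hg : HasDerivAt (fun t : ℝ => x k + t * z k) (z k) 0 := by
      simpa using ((hasDerivAt_id (0:ℝ)).mul_const (z k)).const_add (x k)
    have hml : HasDerivAt (fun u : ℝ => u * Real.log u) (Real.log (x k + 0 * z k) + 1)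
        (x k + 0 * z k) := Real.hasDerivAt_mul_log (by simpa using hK k hk)
    have := hml.comp 0 hg
    simpa [Function.comp_def] using this
  have := (hA.add hq).add hent
  have hsw : (Q *ᵥ z) ⬝ᵥ x = (Q *ᵥ x) ⬝ᵥ z := dot_swap hQsym z x
  exact this.congr_deriv (by rw [hsw]; ring)

lemma key {n m : ℕ} (A : Matrix (Fin n) (Fin m) ℝ) (s : Fin n → ℝ)
    (a : Fin m → ℝ) (Q : Matrix (Fin m) (Fin m) ℝ) (hQ : Q.PosSemidef)
    (lam : ℝ) (hlam : 0 < lam)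
    (yp : Fin m → ℝ) (hyp1 : A *ᵥ yp = s) (hyp2 : ∀ k, 0 < yp k)
    (x : Fin m → ℝ) :
    ((A *ᵥ x = s ∧ ∀ k, 0 ≤ x k) ∧
      ∀ y : Fin m → ℝ, (A *ᵥ y = s ∧ ∀ k, 0 ≤ y k) →
        a ⬝ᵥ x + (1/2) * ((Q *ᵥ x) ⬝ᵥ x) + lam * ∑ k, x k * Real.log (x k) ≤
        a ⬝ᵥ y + (1/2) * ((Q *ᵥ y) ⬝ᵥ y) + lam * ∑ k, y k * Real.log (y k)) ↔
    ∃ v : Fin n → ℝ, s = A *ᵥ x ∧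
      ∀ k, x k = Real.exp (lam⁻¹ * ((Aᵀ *ᵥ v) k - a k - (Q *ᵥ x) k) - 1) := by
  classical
  have hQsym : Qᵀ = Q := by
    have h := hQ.1
    rw [Matrix.IsHermitian] at h
    simpa using h
  constructor
  · rintro ⟨⟨hxA, hx0⟩, hmin⟩
    -- Step A : strict positivity
    have xpos : ∀ k, 0 < x k := by
      by_contra hcon
      push_neg at hcon
      obtain ⟨k0, hk0⟩ := hcon
      have hxk0 : x k0 = 0 := le_antisymm hk0 (hx0 k0)
      set z : Fin m → ℝ := yp - x with hz
      have hAz : A *ᵥ z = 0 := by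
        rw [hz, Matrix.mulVec_sub, hyp1, hxA, sub_self]
      set K : Finset (Fin m) := Finset.univ.filter (fun k => x k ≠ 0) with hK
      have hKmem : ∀ k ∈ K, x k ≠ 0 := by
        intro k hk; simpa [hK] using hk
      have hKc : ∀ k ∈ Kᶜ, x k = 0 := by
        intro k hk
        have := Finset.mem_compl.mp hk
        simpa [hK] using this
      have hk0c : k0 ∈ Kᶜ := by
        rw [Finset.mem_compl]
        simp [hK, hxk0]
      set S : ℝ → ℝ := fun t => a ⬝ᵥ (x + t • z)
          + (1/2) * ((Q *ᵥ (x + t • z)) ⬝ᵥ (x + t • z))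
          + lam * ∑ k ∈ K, (x k + t * z k) * Real.log (x k + t * z k) with hSdef
      have hS := deriv_helper a Q hQsym lam x z K hKmem
      -- decomposition of f along the segment
      have hfdec : ∀ t : ℝ, a ⬝ᵥ (x + t • z) + (1/2) * ((Q *ᵥ (x + t • z)) ⬝ᵥ (x + t • z))
          + lam * ∑ k, (x + t • z) k * Real.log ((x + t • z) k)
          = S t + lam * ∑ k ∈ Kᶜ, (t * yp k) * Real.log (t * yp k) := by
        intro t
        have hsplit : ∑ k, (x + t • z) k * Real.log ((x + t • z) k)
            = ∑ k ∈ K, (x k + t * z k) * Real.log (x k + t * z k)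
              + ∑ k ∈ Kᶜ, (t * yp k) * Real.log (t * yp k) := by
          have hL : (∑ k, (x + t • z) k * Real.log ((x + t • z) k))
              = ∑ k, (x k + t * z k) * Real.log (x k + t * z k) :=
            Finset.sum_congr rfl fun k _ => by
              simp [Pi.add_apply, Pi.smul_apply, smul_eq_mul]
          rw [hL, ← Finset.sum_add_sum_compl K
            (fun k => (x k + t * z k) * Real.log (x k + t * z k))]
          congr 1
          refine Finset.sum_congr rfl fun k hk => ?_
          have h0 : x k = 0 := hKc k hk
          have hzk : z k = yp k := by simp [hz, h0]
          rw [h0, hzk, zero_add]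
        rw [hsplit, mul_add, hSdef]
        ring
      have hS0 : a ⬝ᵥ x + (1/2) * ((Q *ᵥ x) ⬝ᵥ x) + lam * ∑ k, x k * Real.log (x k) = S 0 := by
        have := hfdec 0
        simp only [zero_smul, add_zero, zero_mul, Real.log_zero, mul_zero,
          Finset.sum_const_zero] at this
        simpa using this
      -- slope tendsto atBot
      set D := a ⬝ᵥ z + (Q *ᵥ x) ⬝ᵥ z + lam * ∑ k ∈ K, (Real.log (x k) + 1) * z k with hD
      have hslopeS : Filter.Tendsto (fun t : ℝ => (S t - S 0) / t) (nhdsWithin 0 (Set.Ioi 0)) (nhds D) := by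
        have h1 := hasDerivAt_iff_tendsto_slope.mp hS
        have h2 : Filter.Tendsto (slope S 0) (nhdsWithin 0 (Set.Ioi 0)) (nhds D) :=
          h1.mono_left (nhdsWithin_mono _ (fun t ht => ne_of_gt ht))
        refine h2.congr fun t => ?_
        simp [slope_fun_def, div_eq_inv_mul]
      have hc1 : 0 < ∑ k ∈ Kᶜ, yp k :=
        Finset.sum_pos' (fun k _ => (hyp2 k).le) ⟨k0, hk0c, hyp2 k0⟩
      have hlog2 : Filter.Tendsto (fun t : ℝ => lam * ∑ k ∈ Kᶜ, yp k * Real.log (t * yp k))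
          (nhdsWithin 0 (Set.Ioi 0)) Filter.atBot := by
        have hbase : Filter.Tendsto
            (fun t : ℝ => lam * ((∑ k ∈ Kᶜ, yp k) * Real.log t + ∑ k ∈ Kᶜ, yp k * Real.log (yp k)))
            (nhdsWithin 0 (Set.Ioi 0)) Filter.atBot := by
          have h1 : Filter.Tendsto (fun t : ℝ => (∑ k ∈ Kᶜ, yp k) * Real.log t)
              (nhdsWithin 0 (Set.Ioi 0)) Filter.atBot :=
            (Real.tendsto_log_nhdsGT_zero).const_mul_atBot hc1
          have h2 := Filter.tendsto_atBot_add_const_right (nhdsWithin (0:ℝ) (Set.Ioi 0))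
            (∑ k ∈ Kᶜ, yp k * Real.log (yp k)) h1
          exact h2.const_mul_atBot hlam
        refine hbase.congr' ?_
        filter_upwards [self_mem_nhdsWithin] with t ht
        have ht0 : (0:ℝ) < t := ht
        congr 1
        rw [Finset.sum_mul, ← Finset.sum_add_distrib]
        refine Finset.sum_congr rfl fun k _ => ?_
        rw [Real.log_mul ht0.ne' (hyp2 k).ne']
        ring
      have hlim : Filter.Tendsto
          (fun t : ℝ => ((a ⬝ᵥ (x + t • z) + (1/2) * ((Q *ᵥ (x + t • z)) ⬝ᵥ (x + t • z))
            + lam * ∑ k, (x + t • z) k * Real.log ((x + t • z) k))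
            - (a ⬝ᵥ x + (1/2) * ((Q *ᵥ x) ⬝ᵥ x) + lam * ∑ k, x k * Real.log (x k))) / t)
          (nhdsWithin 0 (Set.Ioi 0)) Filter.atBot := by
        have hsum := hslopeS.add_atBot hlog2
        refine hsum.congr' ?_
        filter_upwards [self_mem_nhdsWithin] with t ht
        have ht0 : (0:ℝ) < t := ht
        rw [hfdec t, hS0]
        have hpull : ∑ k ∈ Kᶜ, (t * yp k) * Real.log (t * yp k)
            = t * ∑ k ∈ Kᶜ, yp k * Real.log (t * yp k) := by
          rw [Finset.mul_sum]
          exact Finset.sum_congr rfl fun k _ => by ring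
        rw [hpull]
        field_simp
        ring
      have hev : ∀ᶠ t in nhdsWithin (0:ℝ) (Set.Ioi 0),
          ((a ⬝ᵥ (x + t • z) + (1/2) * ((Q *ᵥ (x + t • z)) ⬝ᵥ (x + t • z))
            + lam * ∑ k, (x + t • z) k * Real.log ((x + t • z) k))
            - (a ⬝ᵥ x + (1/2) * ((Q *ᵥ x) ⬝ᵥ x) + lam * ∑ k, x k * Real.log (x k))) / t < 0 :=
        hlim.eventually (Filter.eventually_lt_atBot 0)
      have hev2 : ∀ᶠ t in nhdsWithin (0:ℝ) (Set.Ioi 0), t ≤ 1 := by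
        filter_upwards [Ioc_mem_nhdsGT_of_mem (Set.mem_Ico.mpr ⟨le_refl 0, zero_lt_one⟩)]
          with t ht
        exact ht.2
      have : (nhdsWithin (0:ℝ) (Set.Ioi 0)).NeBot := nhdsGT_neBot 0
      obtain ⟨t, ⟨hneg, ht1⟩, htpos⟩ := ((hev.and hev2).and self_mem_nhdsWithin).exists
      have ht0 : (0:ℝ) < t := htpos
      have hfeas : A *ᵥ (x + t • z) = s ∧ ∀ k, 0 ≤ (x + t • z) k := by
        constructor
        · rw [Matrix.mulVec_add, Matrix.mulVec_smul, hAz, hxA]; simp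
        · intro k
          have : (x + t • z) k = (1 - t) * x k + t * yp k := by
            simp [hz, Pi.add_apply, Pi.smul_apply, smul_eq_mul]; ring
          rw [this]
          have := hx0 k
          have := (hyp2 k).le
          nlinarith
      have hle := hmin _ hfeas
      rcases div_neg_iff.mp hneg with ⟨h1, h2⟩ | ⟨h1, h2⟩
      · linarith
      · linarith
    -- Step B : Lagrange multipliers
    set w : Fin m → ℝ := fun k => a k + (Q *ᵥ x) k + lam * (Real.log (x k) + 1) with hw
    have horth : ∀ z, A *ᵥ z = 0 → w ⬝ᵥ z = 0 := by
      intro z hz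
      have hpos_ev : ∀ᶠ t : ℝ in nhds 0, ∀ k, 0 ≤ x k + t * z k := by
        rw [Filter.eventually_all]
        intro k
        have hcont : Filter.Tendsto (fun t : ℝ => x k + t * z k) (nhds 0) (nhds (x k + 0 * z k)) := by
          apply Filter.Tendsto.const_add
          exact (continuous_id.mul continuous_const).tendsto 0
        have := hcont.eventually (eventually_gt_nhds (show (0:ℝ) < x k + 0 * z k by
          simpa using xpos k))
        exact this.mono fun t ht => ht.le
      have hloc : IsLocalMin (fun t : ℝ => a ⬝ᵥ (x + t • z)
          + (1/2) * ((Q *ᵥ (x + t • z)) ⬝ᵥ (x + t • z))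
          + lam * ∑ k, (x k + t * z k) * Real.log (x k + t * z k)) 0 := by
        have hgoal : ∀ᶠ t : ℝ in nhds 0,
            a ⬝ᵥ x + (1/2) * ((Q *ᵥ x) ⬝ᵥ x) + lam * ∑ k, x k * Real.log (x k) ≤
            a ⬝ᵥ (x + t • z) + (1/2) * ((Q *ᵥ (x + t • z)) ⬝ᵥ (x + t • z))
            + lam * ∑ k, (x k + t * z k) * Real.log (x k + t * z k) := by
          filter_upwards [hpos_ev] with t ht
          have hfeas : A *ᵥ (x + t • z) = s ∧ ∀ k, 0 ≤ (x + t • z) k := by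
            constructor
            · rw [Matrix.mulVec_add, Matrix.mulVec_smul, hz, hxA]; simp
            · intro k; simpa [Pi.add_apply, Pi.smul_apply, smul_eq_mul] using ht k
          have := hmin _ hfeas
          have hrw : ∑ k, (x + t • z) k * Real.log ((x + t • z) k)
              = ∑ k, (x k + t * z k) * Real.log (x k + t * z k) :=
            Finset.sum_congr rfl fun k _ => by
              simp [Pi.add_apply, Pi.smul_apply, smul_eq_mul]
          rw [hrw] at this
          exact this
        unfold IsLocalMin IsMinFilter
        refine hgoal.mono fun t ht => ?_
        simpa using ht
      have hD := deriv_helper a Q hQsym lam x z Finset.univ (fun k _ => (xpos k).ne')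
      have h0 := hloc.hasDerivAt_eq_zero hD
      rw [hw]
      have : w ⬝ᵥ z = a ⬝ᵥ z + (Q *ᵥ x) ⬝ᵥ z + lam * ∑ k, (Real.log (x k) + 1) * z k := by
        simp only [hw, dotProduct, Finset.mul_sum]
        rw [← Finset.sum_add_distrib, ← Finset.sum_add_distrib]
        exact Finset.sum_congr rfl fun k _ => by ring
      rw [← hw, this, h0]
    obtain ⟨v, hv⟩ := exists_mulVec_of_orth A w horth
    refine ⟨v, hxA.symm, fun k => ?_⟩
    have hvk : (Aᵀ *ᵥ v) k = w k := congrFun hv k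
    have hlogk : lam⁻¹ * ((Aᵀ *ᵥ v) k - a k - (Q *ᵥ x) k) - 1 = Real.log (x k) := by
      rw [hvk, hw]
      field_simp
      ring
    rw [hlogk, Real.exp_log (xpos k)]
  · rintro ⟨v, hsx, hxe⟩
    have xpos : ∀ k, 0 < x k := fun k => (hxe k).symm ▸ Real.exp_pos _
    refine ⟨⟨hsx.symm, fun k => (xpos k).le⟩, ?_⟩
    rintro y ⟨hyA, hy0⟩
    set w : Fin m → ℝ := Aᵀ *ᵥ v with hw
    have hlog : ∀ k, lam * (Real.log (x k) + 1) = w k - a k - (Q *ᵥ x) k := by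
      intro k
      have h1 := congrArg Real.log (hxe k)
      rw [Real.log_exp] at h1
      rw [h1]
      field_simp
      ring
    have hwz : ∀ u : Fin m → ℝ, w ⬝ᵥ u = v ⬝ᵥ (A *ᵥ u) := by
      intro u
      rw [hw, Matrix.mulVec_transpose, ← Matrix.dotProduct_mulVec]
    have e2 : w ⬝ᵥ y = w ⬝ᵥ x := by rw [hwz, hwz, hyA, ← hsx]
    have hent : ∑ k, (Real.log (x k) + 1) * (y k - x k)
        ≤ ∑ k, (y k * Real.log (y k) - x k * Real.log (x k)) :=
      Finset.sum_le_sum fun k _ => ent_ineq (xpos k) (hy0 k)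
    have hentm := mul_le_mul_of_nonneg_left hent hlam.le
    rw [Finset.sum_sub_distrib, mul_sub] at hentm
    have hquad := quad_ineq hQ x y
    have e1 : lam * ∑ k, (Real.log (x k) + 1) * (y k - x k)
        = (w ⬝ᵥ y - w ⬝ᵥ x) - (a ⬝ᵥ y - a ⬝ᵥ x) - ((Q *ᵥ x) ⬝ᵥ y - (Q *ᵥ x) ⬝ᵥ x) := by
      rw [Finset.mul_sum]
      have hterm : ∀ k ∈ Finset.univ, lam * ((Real.log (x k) + 1) * (y k - x k))
          = w k * y k - w k * x k - (a k * y k - a k * x k)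
            - ((Q *ᵥ x) k * y k - (Q *ᵥ x) k * x k) := by
        intro k _
        have h := hlog k
        calc lam * ((Real.log (x k) + 1) * (y k - x k))
            = (lam * (Real.log (x k) + 1)) * (y k - x k) := by ring
          _ = (w k - a k - (Q *ᵥ x) k) * (y k - x k) := by rw [h]
          _ = w k * y k - w k * x k - (a k * y k - a k * x k)
              - ((Q *ᵥ x) k * y k - (Q *ᵥ x) k * x k) := by ring
      rw [Finset.sum_congr rfl hterm]
      simp only [dotProduct, Finset.sum_sub_distrib]
    linarith

/-- Lemma 2: the entropy-regularized Nash equilibrium is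
characterized by the smooth softmax-type equations. -/
theorem stmt7 (n m p : ℕ) (hm : 0 < m) (hp : 0 < p)
    (E : Matrix (Fin (n + 1)) (Fin m) ℝ)
    (d : Fin p → Fin (n + 1)) (r : Fin p → Fin (n + 1) → ℝ)
    (b : Fin p → Fin m → ℝ)
    (C : Fin p → Fin p → Matrix (Fin m) (Fin m) ℝ)
    (Ered : Fin p → Matrix (Fin n) (Fin m) ℝ)
    (hEred : ∀ i, Ered i = E.submatrix (d i).succAbove id)
    (s : Fin p → Fin n → ℝ)
    (hs : ∀ i, s i = fun j => r i ((d i).succAbove j))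
    (P : Fin p → Set (Fin m → ℝ))
    (hP : ∀ i, P i = {y | Ered i *ᵥ y = s i ∧ ∀ k, 0 ≤ y k})
    (hPpos : ∀ i, ∃ y ∈ P i, ∀ k, 0 < y k)
    (hC : ∀ i, (C i i).PosSemidef)
    (lam : ℝ) (hlam : 0 < lam)
    (cost : Fin p → (Fin p → Fin m → ℝ) → (Fin m → ℝ) → ℝ)
    (hcost : ∀ i x y, cost i x y =
      (b i + (1 / 2 : ℝ) • (C i i *ᵥ y) +
        ∑ j ∈ Finset.univ.erase i, C i j *ᵥ x j) ⬝ᵥ y +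
      lam * ∑ k, y k * Real.log (y k))
    (x : Fin p → Fin m → ℝ) :
    (∀ i, x i ∈ P i ∧ ∀ y ∈ P i, cost i x (x i) ≤ cost i x y) ↔
      ∃ v : Fin p → Fin n → ℝ,
        (∀ i, s i = Ered i *ᵥ x i) ∧
        (∀ i k, x i k = Real.exp (lam⁻¹ *
          (((Ered i)ᵀ *ᵥ v i) k - b i k - (∑ j, C i j *ᵥ x j) k) - 1)) := by
  classical
  have hiff : ∀ i, (x i ∈ P i ∧ ∀ y ∈ P i, cost i x (x i) ≤ cost i x y) ↔
      ∃ v : Fin n → ℝ, s i = Ered i *ᵥ x i ∧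
        ∀ k, x i k = Real.exp (lam⁻¹ *
          (((Ered i)ᵀ *ᵥ v) k - b i k - (∑ j, C i j *ᵥ x j) k) - 1) := by
    intro i
    obtain ⟨yp, hyp, hyppos⟩ := hPpos i
    rw [hP i] at hyp
    set a : Fin m → ℝ := b i + ∑ j ∈ Finset.univ.erase i, C i j *ᵥ x j with ha
    have hcost' : ∀ y : Fin m → ℝ, cost i x y =
        a ⬝ᵥ y + (1/2) * ((C i i *ᵥ y) ⬝ᵥ y) + lam * ∑ k, y k * Real.log (y k) := by
      intro y
      rw [hcost, ha]
      simp only [add_dotProduct, smul_dotProduct, smul_eq_mul]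
      ring
    have hk := key (Ered i) (s i) a (C i i) (hC i) lam hlam yp hyp.1 hyppos (x i)
    have harg : ∀ (v : Fin n → ℝ) (k : Fin m),
        lam⁻¹ * (((Ered i)ᵀ *ᵥ v) k - a k - (C i i *ᵥ x i) k) - 1 =
        lam⁻¹ * (((Ered i)ᵀ *ᵥ v) k - b i k - (∑ j, C i j *ᵥ x j) k) - 1 := by
      intro v k
      have h1 : (∑ j, C i j *ᵥ x j) k
          = (C i i *ᵥ x i) k + ∑ j ∈ Finset.univ.erase i, (C i j *ᵥ x j) k := by
        rw [← Finset.sum_apply]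
        rw [← Finset.add_sum_erase Finset.univ (fun j => C i j *ᵥ x j) (Finset.mem_univ i)]
        simp [Finset.sum_apply]
      have h2 : a k = b i k + ∑ j ∈ Finset.univ.erase i, (C i j *ᵥ x j) k := by
        rw [ha]
        simp [Finset.sum_apply]
      rw [h1, h2]
      ring
    constructor
    · rintro ⟨hmem, hmin⟩
      rw [hP i] at hmem
      have : (Ered i *ᵥ x i = s i ∧ ∀ k, 0 ≤ x i k) ∧
          ∀ y : Fin m → ℝ, (Ered i *ᵥ y = s i ∧ ∀ k, 0 ≤ y k) →
            a ⬝ᵥ x i + (1/2) * ((C i i *ᵥ x i) ⬝ᵥ x i) + lam * ∑ k, x i k * Real.log (x i k) ≤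
            a ⬝ᵥ y + (1/2) * ((C i i *ᵥ y) ⬝ᵥ y) + lam * ∑ k, y k * Real.log (y k) := by
        refine ⟨hmem, fun y hy => ?_⟩
        have := hmin y (by rw [hP i]; exact hy)
        rwa [hcost', hcost'] at this
      obtain ⟨v, hv1, hv2⟩ := hk.mp this
      exact ⟨v, hv1, fun k => by rw [hv2 k, harg]⟩
    · rintro ⟨v, hv1, hv2⟩
      have := hk.mpr ⟨v, hv1, fun k => by rw [hv2 k, harg]⟩
      obtain ⟨hfeas, hmin⟩ := this
      refine ⟨by rw [hP i]; exact hfeas, fun y hy => ?_⟩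
      rw [hP i] at hy
      have := hmin y hy
      rwa [← hcost', ← hcost'] at this
  constructor
  · intro h
    choose v hv1 hv2 using fun i => (hiff i).mp (h i)
    exact ⟨v, hv1, hv2⟩
  · rintro ⟨v, h1, h2⟩ i
    exact (hiff i).mpr ⟨v i, h1 i, h2 i⟩
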